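/- Let (I_t)_{t} be uniform random indices in [N], let X ∈ {0,1}^N have i.i.d. entries, and let S ⊆ [N] be the (random) set of indices appearing among q i.i.d. uniform samples from [N]. Let μ = Pr[i ∈ S] = 1 − (1 − 1/N)^q for any fixed i. Then μ ≤ q/N, and for any random variable M with I(M; X) ≤ c one has E_S[I(M; X_S)] ≤ (q/N)·c, where X_S denotes the restriction of X to coordinates in S. -/

import Mathlib

open Finset

-- Probability of an event under a finite probability mass function.
open Classical in
noncomputable def prob {Ω : Type*} [Fintype Ω] (μ : Ω → ℝ) (E : Set Ω) : ℝ :=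
  ∑ ω, if ω ∈ E then μ ω else 0

-- Shannon entropy (base 2) of a random variable `X` on a finite probability space.
noncomputable def entropy {Ω α : Type*} [Fintype Ω] (μ : Ω → ℝ) (X : Ω → α) : ℝ :=
  -∑ ω, μ ω * Real.logb 2 (prob μ {ω' | X ω' = X ω})

-- Conditional entropy `H(X | Y) = H(X,Y) − H(Y)`.
noncomputable def condEntropy {Ω α β : Type*} [Fintype Ω] (μ : Ω → ℝ)
    (X : Ω → α) (Y : Ω → β) : ℝ :=
  entropy μ (fun ω => (X ω, Y ω)) - entropy μ Y


-- Mutual information `I(X ; Y) = H(X) + H(Y) − H(X,Y)`.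
noncomputable def mutInfo {Ω α β : Type*} [Fintype Ω] (μ : Ω → ℝ)
    (X : Ω → α) (Y : Ω → β) : ℝ :=
  entropy μ X + entropy μ Y - entropy μ (fun ω => (X ω, Y ω))

section Basics
variable {Ω : Type*} [Fintype Ω] {μ : Ω → ℝ}

lemma prob_congr (E F : Set Ω) (h : E = F) : prob μ E = prob μ F := by rw [h]

lemma prob_nonneg (h0 : ∀ ω, 0 ≤ μ ω) (E : Set Ω) : 0 ≤ prob μ E := by
  classical
  refine Finset.sum_nonneg fun ω _ => ?_
  split <;> simp [h0 ω]

lemma prob_mono (h0 : ∀ ω, 0 ≤ μ ω) {E F : Set Ω} (h : E ⊆ F) : prob μ E ≤ prob μ F := by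
  classical
  refine Finset.sum_le_sum fun ω _ => ?_
  by_cases hE : ω ∈ E
  · simp [hE, h hE]
  · simp only [hE, if_false]
    split <;> simp [h0 ω]

lemma le_prob_of_mem (h0 : ∀ ω, 0 ≤ μ ω) {E : Set Ω} {ω : Ω} (h : ω ∈ E) : μ ω ≤ prob μ E := by
  classical
  have : prob μ E = ∑ ω', if ω' ∈ E then μ ω' else 0 := by
    simp [prob]
  rw [this]
  have := Finset.single_le_sum (f := fun ω' => if ω' ∈ E then μ ω' else 0)
    (fun ω' _ => by split <;> simp [h0 ω']) (Finset.mem_univ ω)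
  simpa [h] using this

lemma prob_univ (h1 : ∑ ω, μ ω = 1) : prob μ (Set.univ : Set Ω) = 1 := by
  classical
  simpa [prob] using h1

/-- grouping lemma -/
lemma sum_mul_comp {α : Type*} [DecidableEq α] (X : Ω → α) (f : α → ℝ) :
    ∑ ω, μ ω * f (X ω)
      = ∑ a ∈ Finset.univ.image X, prob μ {ω' | X ω' = a} * f a := by
  classical
  have : ∀ a, prob μ {ω' | X ω' = a} * f a
      = ∑ ω, if X ω = a then μ ω * f (X ω) else 0 := by
    intro a
    simp only [prob, Set.mem_setOf_eq, Finset.sum_mul]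
    refine Finset.sum_congr rfl fun ω _ => ?_
    by_cases h : X ω = a <;> simp [h]
  rw [Finset.sum_congr rfl fun a _ => this a, Finset.sum_comm]
  refine Finset.sum_congr rfl fun ω _ => ?_
  rw [Finset.sum_ite_eq (Finset.univ.image X) (X ω) (fun _ => μ ω * f (X ω))]
  simp

lemma sum_prob_inter {α : Type*} [DecidableEq α] (X : Ω → α) (Q : Ω → Prop) :
    ∑ a ∈ Finset.univ.image X, prob μ {ω | X ω = a ∧ Q ω} = prob μ {ω | Q ω} := by
  classical
  have : ∀ a, prob μ {ω | X ω = a ∧ Q ω}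
      = ∑ ω, if X ω = a then (if Q ω then μ ω else 0) else 0 := by
    intro a
    simp only [prob, Set.mem_setOf_eq]
    refine Finset.sum_congr rfl fun ω _ => ?_
    by_cases h : X ω = a <;> by_cases h' : Q ω <;> simp [h, h']
  rw [Finset.sum_congr rfl fun a _ => this a, Finset.sum_comm]
  simp only [prob, Set.mem_setOf_eq]
  refine Finset.sum_congr rfl fun ω _ => ?_
  rw [Finset.sum_ite_eq (Finset.univ.image X) (X ω) (fun _ => if Q ω then μ ω else 0)]
  simp

lemma entropy_congr {α β : Type*} {X : Ω → α} {Y : Ω → β}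
    (h : ∀ ω ω', X ω = X ω' ↔ Y ω = Y ω') : entropy μ X = entropy μ Y := by
  unfold entropy
  congr 1
  refine Finset.sum_congr rfl fun ω _ => ?_
  congr 1
  refine congrArg _ (prob_congr _ _ ?_)
  ext ω'
  simp only [Set.mem_setOf_eq]
  exact h ω' ω

end Basics

section Key
variable {Ω : Type*} [Fintype Ω] {μ : Ω → ℝ}

lemma sum_prob_fiber_eq_one {γ' : Type*} [DecidableEq γ'] (h1 : ∑ ω, μ ω = 1) (Z : Ω → γ') :
    ∑ z ∈ Finset.univ.image Z, prob μ {ω | Z ω = z} = 1 := by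
  have h := sum_prob_inter (μ := μ) Z (fun _ => True)
  simp only [and_true] at h
  rw [h]
  have h2 : {ω : Ω | True} = (Set.univ : Set Ω) := by ext; simp
  rw [h2, prob_univ h1]

lemma key_sum_le_one {α β γ' : Type*} (h0 : ∀ ω, 0 ≤ μ ω) (h1 : ∑ ω, μ ω = 1)
    (X : Ω → α) (Y : Ω → β) (Z : Ω → γ') :
    ∑ ω, μ ω *
      (prob μ {ω' | X ω' = X ω ∧ Z ω' = Z ω} * prob μ {ω' | Y ω' = Y ω ∧ Z ω' = Z ω} /
        (prob μ {ω' | X ω' = X ω ∧ Y ω' = Y ω ∧ Z ω' = Z ω} * prob μ {ω' | Z ω' = Z ω})) ≤ 1 := by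
  classical
  set G : α × β × γ' → ℝ := fun w =>
    prob μ {ω' | X ω' = w.1 ∧ Z ω' = w.2.2} * prob μ {ω' | Y ω' = w.2.1 ∧ Z ω' = w.2.2} /
      (prob μ {ω' | X ω' = w.1 ∧ Y ω' = w.2.1 ∧ Z ω' = w.2.2} * prob μ {ω' | Z ω' = w.2.2})
    with hG
  set W : Ω → α × β × γ' := fun ω => (X ω, Y ω, Z ω) with hW
  have hstep : ∑ ω, μ ω *
      (prob μ {ω' | X ω' = X ω ∧ Z ω' = Z ω} * prob μ {ω' | Y ω' = Y ω ∧ Z ω' = Z ω} /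
        (prob μ {ω' | X ω' = X ω ∧ Y ω' = Y ω ∧ Z ω' = Z ω} * prob μ {ω' | Z ω' = Z ω}))
      = ∑ w ∈ Finset.univ.image W, prob μ {ω' | W ω' = w} * G w := sum_mul_comp W G
  rw [hstep]
  set G2 : α × β × γ' → ℝ := fun w =>
    prob μ {ω' | X ω' = w.1 ∧ Z ω' = w.2.2} * prob μ {ω' | Y ω' = w.2.1 ∧ Z ω' = w.2.2} /
      prob μ {ω' | Z ω' = w.2.2} with hG2
  have hG2nn : ∀ w, 0 ≤ G2 w := by
    intro w
    exact div_nonneg (mul_nonneg (prob_nonneg h0 _) (prob_nonneg h0 _)) (prob_nonneg h0 _)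
  have hterm : ∀ w, prob μ {ω' | W ω' = w} * G w ≤ G2 w := by
    intro w
    have hset : {ω' | W ω' = w} = {ω' | X ω' = w.1 ∧ Y ω' = w.2.1 ∧ Z ω' = w.2.2} := by
      ext ω'; simp [hW, Prod.ext_iff, and_assoc]
    rw [hset]
    rcases eq_or_lt_of_le
        (prob_nonneg h0 (E := {ω' | X ω' = w.1 ∧ Y ω' = w.2.1 ∧ Z ω' = w.2.2})) with hz | hz
    · rw [← hz, zero_mul]
      exact hG2nn w
    · have hd : 0 < prob μ {ω' | Z ω' = w.2.2} :=
        lt_of_lt_of_le hz (prob_mono h0 (fun ω' h => h.2.2))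
      refine le_of_eq ?_
      rw [hG, hG2]
      field_simp
  refine le_trans (Finset.sum_le_sum fun w _ => hterm w) ?_
  have hsub : (Finset.univ.image W) ⊆
      (Finset.univ.image X) ×ˢ ((Finset.univ.image Y) ×ˢ (Finset.univ.image Z)) := by
    intro w hw
    rcases Finset.mem_image.mp hw with ⟨ω, _, rfl⟩
    simp only [Finset.mem_product, Finset.mem_image]
    exact ⟨⟨ω, Finset.mem_univ ω, rfl⟩, ⟨ω, Finset.mem_univ ω, rfl⟩, ⟨ω, Finset.mem_univ ω, rfl⟩⟩
  refine le_trans (Finset.sum_le_sum_of_subset_of_nonneg hsub (fun w _ _ => hG2nn w)) ?_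
  rw [Finset.sum_product]
  have hswap : ∑ x ∈ Finset.univ.image X, ∑ p ∈ (Finset.univ.image Y) ×ˢ (Finset.univ.image Z),
        G2 (x, p)
      = ∑ x ∈ Finset.univ.image X, ∑ y ∈ Finset.univ.image Y, ∑ z ∈ Finset.univ.image Z,
        G2 (x, y, z) := by
    exact Finset.sum_congr rfl fun x _ =>
      Finset.sum_product (s := Finset.univ.image Y) (t := Finset.univ.image Z)
        (f := fun p => G2 (x, p))
  rw [hswap]
  have hswap2 : ∑ x ∈ Finset.univ.image X, ∑ y ∈ Finset.univ.image Y, ∑ z ∈ Finset.univ.image Z,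
        G2 (x, y, z)
      = ∑ z ∈ Finset.univ.image Z, ∑ x ∈ Finset.univ.image X, ∑ y ∈ Finset.univ.image Y,
        G2 (x, y, z) := by
    calc ∑ x ∈ Finset.univ.image X, ∑ y ∈ Finset.univ.image Y, ∑ z ∈ Finset.univ.image Z,
          G2 (x, y, z)
        = ∑ x ∈ Finset.univ.image X, ∑ z ∈ Finset.univ.image Z, ∑ y ∈ Finset.univ.image Y,
          G2 (x, y, z) := Finset.sum_congr rfl fun x _ => Finset.sum_comm
      _ = ∑ z ∈ Finset.univ.image Z, ∑ x ∈ Finset.univ.image X, ∑ y ∈ Finset.univ.image Y,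
          G2 (x, y, z) := Finset.sum_comm
  rw [hswap2]
  have hperz : ∀ z ∈ Finset.univ.image Z,
      ∑ x ∈ Finset.univ.image X, ∑ y ∈ Finset.univ.image Y, G2 (x, y, z)
        ≤ prob μ {ω | Z ω = z} := by
    intro z _
    have hin : ∀ x, ∑ y ∈ Finset.univ.image Y, G2 (x, y, z)
        = prob μ {ω' | X ω' = x ∧ Z ω' = z} * prob μ {ω | Z ω = z} / prob μ {ω | Z ω = z} := by
      intro x
      rw [hG2]
      simp only
      rw [← Finset.sum_div, ← Finset.mul_sum, sum_prob_inter Y (fun ω => Z ω = z)]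
    rw [Finset.sum_congr rfl fun x _ => hin x, ← Finset.sum_div, ← Finset.sum_mul,
      sum_prob_inter X (fun ω => Z ω = z)]
    rcases eq_or_lt_of_le (prob_nonneg h0 (E := {ω | Z ω = z})) with hz | hz
    · rw [← hz]; simp
    · rw [mul_div_assoc, div_self (ne_of_gt hz), mul_one]
  calc ∑ z ∈ Finset.univ.image Z, ∑ x ∈ Finset.univ.image X, ∑ y ∈ Finset.univ.image Y,
        G2 (x, y, z)
      ≤ ∑ z ∈ Finset.univ.image Z, prob μ {ω | Z ω = z} := Finset.sum_le_sum hperz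
    _ = 1 := sum_prob_fiber_eq_one h1 Z

end Key

section Chunk3
variable {Ω : Type*} [Fintype Ω] {μ : Ω → ℝ}

lemma entropy_def' {α : Type*} (X : Ω → α) (p : Ω → Set Ω)
    (hp : ∀ ω, {ω' | X ω' = X ω} = p ω) :
    entropy μ X = -∑ ω, μ ω * Real.logb 2 (prob μ (p ω)) := by
  unfold entropy
  congr 1
  exact Finset.sum_congr rfl fun ω _ => by rw [hp]

lemma condEntropy_pair_le {α β γ' : Type*} (h0 : ∀ ω, 0 ≤ μ ω) (h1 : ∑ ω, μ ω = 1)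
    (X : Ω → α) (Y : Ω → β) (Z : Ω → γ') :
    condEntropy μ X (fun ω => (Y ω, Z ω)) ≤ condEntropy μ X Z := by
  classical
  set pa : Ω → ℝ := fun ω => prob μ {ω' | X ω' = X ω ∧ Y ω' = Y ω ∧ Z ω' = Z ω} with hpa
  set pb : Ω → ℝ := fun ω => prob μ {ω' | X ω' = X ω ∧ Z ω' = Z ω} with hpb
  set pc : Ω → ℝ := fun ω => prob μ {ω' | Y ω' = Y ω ∧ Z ω' = Z ω} with hpc
  set pd : Ω → ℝ := fun ω => prob μ {ω' | Z ω' = Z ω} with hpd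
  have e1 : entropy μ (fun ω => (X ω, (Y ω, Z ω))) = -∑ ω, μ ω * Real.logb 2 (pa ω) :=
    entropy_def' _ _ (fun ω => by ext ω'; simp [Prod.ext_iff])
  have e2 : entropy μ (fun ω => (Y ω, Z ω)) = -∑ ω, μ ω * Real.logb 2 (pc ω) :=
    entropy_def' _ _ (fun ω => by ext ω'; simp [Prod.ext_iff])
  have e3 : entropy μ (fun ω => (X ω, Z ω)) = -∑ ω, μ ω * Real.logb 2 (pb ω) :=
    entropy_def' _ _ (fun ω => by ext ω'; simp [Prod.ext_iff])
  have e4 : entropy μ Z = -∑ ω, μ ω * Real.logb 2 (pd ω) :=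
    entropy_def' _ _ (fun ω => by ext ω'; simp)
  unfold condEntropy
  rw [e1, e2, e3, e4]
  have hL : (0:ℝ) < Real.log 2 := Real.log_pos (by norm_num)
  have hmain : ∑ ω, μ ω * (Real.logb 2 (pb ω) + Real.logb 2 (pc ω)
      - Real.logb 2 (pa ω) - Real.logb 2 (pd ω)) ≤ 0 := by
    have hstep : ∀ ω, μ ω * (Real.logb 2 (pb ω) + Real.logb 2 (pc ω)
        - Real.logb 2 (pa ω) - Real.logb 2 (pd ω))
        ≤ μ ω * ((pb ω * pc ω / (pa ω * pd ω) - 1) / Real.log 2) := by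
      intro ω
      rcases eq_or_lt_of_le (h0 ω) with hω | hω
      · rw [← hω]; simp
      · have hA : μ ω ≤ pa ω := le_prob_of_mem h0 (by exact ⟨rfl, rfl, rfl⟩)
        have hB : μ ω ≤ pb ω := le_prob_of_mem h0 (by exact ⟨rfl, rfl⟩)
        have hC : μ ω ≤ pc ω := le_prob_of_mem h0 (by exact ⟨rfl, rfl⟩)
        have hD : μ ω ≤ pd ω := le_prob_of_mem h0 (by exact rfl)
        have hA0 : 0 < pa ω := lt_of_lt_of_le hω hA
        have hB0 : 0 < pb ω := lt_of_lt_of_le hω hB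
        have hC0 : 0 < pc ω := lt_of_lt_of_le hω hC
        have hD0 : 0 < pd ω := lt_of_lt_of_le hω hD
        refine mul_le_mul_of_nonneg_left ?_ (le_of_lt hω)
        have hlog : Real.logb 2 (pb ω) + Real.logb 2 (pc ω)
            - Real.logb 2 (pa ω) - Real.logb 2 (pd ω)
            = Real.logb 2 (pb ω * pc ω / (pa ω * pd ω)) := by
          rw [Real.logb_div (by positivity) (by positivity),
            Real.logb_mul (ne_of_gt hB0) (ne_of_gt hC0),
            Real.logb_mul (ne_of_gt hA0) (ne_of_gt hD0)]
          ring
        rw [hlog, Real.logb, div_le_div_iff_of_pos_right hL]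
        exact Real.log_le_sub_one_of_pos (by positivity)
    refine le_trans (Finset.sum_le_sum fun ω _ => hstep ω) ?_
    have heq : ∑ ω, μ ω * ((pb ω * pc ω / (pa ω * pd ω) - 1) / Real.log 2)
        = ((∑ ω, μ ω * (pb ω * pc ω / (pa ω * pd ω))) - ∑ ω, μ ω) / Real.log 2 := by
      rw [← Finset.sum_sub_distrib, Finset.sum_div]
      refine Finset.sum_congr rfl fun ω _ => ?_
      ring
    rw [heq, h1]
    apply div_nonpos_of_nonpos_of_nonneg _ (le_of_lt hL)
    rw [sub_nonpos]
    exact key_sum_le_one h0 h1 X Y Z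
  have hexp : ∑ ω, μ ω * (Real.logb 2 (pb ω) + Real.logb 2 (pc ω)
      - Real.logb 2 (pa ω) - Real.logb 2 (pd ω))
      = ∑ ω, μ ω * Real.logb 2 (pb ω) + ∑ ω, μ ω * Real.logb 2 (pc ω)
        - ∑ ω, μ ω * Real.logb 2 (pa ω) - ∑ ω, μ ω * Real.logb 2 (pd ω) := by
    rw [← Finset.sum_add_distrib, ← Finset.sum_sub_distrib, ← Finset.sum_sub_distrib]
    refine Finset.sum_congr rfl fun ω _ => ?_
    ring
  rw [hexp] at hmain
  linarith

lemma condEntropy_congr {α α' β β' : Type*} {X : Ω → α} {X' : Ω → α'} {Y : Ω → β} {Y' : Ω → β'}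
    (hX : ∀ ω ω', X ω = X ω' ↔ X' ω = X' ω') (hY : ∀ ω ω', Y ω = Y ω' ↔ Y' ω = Y' ω') :
    condEntropy μ X Y = condEntropy μ X' Y' := by
  unfold condEntropy
  rw [entropy_congr hY, entropy_congr (μ := μ)
    (X := fun ω => (X ω, Y ω)) (Y := fun ω => (X' ω, Y' ω))
    (fun ω ω' => by simp [Prod.ext_iff, hX ω ω', hY ω ω'])]

lemma mutInfo_congr₂ {α β β' : Type*} {M : Ω → α} {Y : Ω → β} {Y' : Ω → β'}
    (hY : ∀ ω ω', Y ω = Y ω' ↔ Y' ω = Y' ω') :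
    mutInfo μ M Y = mutInfo μ M Y' := by
  unfold mutInfo
  rw [entropy_congr hY, entropy_congr (μ := μ)
    (X := fun ω => (M ω, Y ω)) (Y := fun ω => (M ω, Y' ω))
    (fun ω ω' => by simp [Prod.ext_iff, hY ω ω'])]

lemma condEntropy_mono_cond {α β β' : Type*} (h0 : ∀ ω, 0 ≤ μ ω) (h1 : ∑ ω, μ ω = 1)
    {A : Ω → α} {C : Ω → β} {D : Ω → β'}
    (hd : ∀ ω ω', C ω = C ω' → D ω = D ω') :
    condEntropy μ A C ≤ condEntropy μ A D := by
  have h := condEntropy_pair_le h0 h1 A C D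
  have heq : condEntropy μ A C = condEntropy μ A (fun ω => (C ω, D ω)) :=
    condEntropy_congr (fun ω ω' => Iff.rfl)
      (fun ω ω' => ⟨fun hc => by simp [Prod.ext_iff, hc, hd ω ω' hc],
        fun hp => (Prod.ext_iff.mp hp).1⟩)
  rw [heq]
  exact h

lemma entropy_const {β : Type*} (h1 : ∑ ω, μ ω = 1) (b : β) :
    entropy μ (fun _ : Ω => b) = 0 := by
  unfold entropy
  have : {ω' : Ω | b = b} = Set.univ := by ext; simp
  simp [this, prob_univ h1]

lemma condEntropy_le_entropy {α β : Type*} (h0 : ∀ ω, 0 ≤ μ ω) (h1 : ∑ ω, μ ω = 1)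
    (A : Ω → α) (B : Ω → β) :
    condEntropy μ A B ≤ entropy μ A := by
  have h := condEntropy_mono_cond h0 h1 (A := A) (C := B) (D := fun _ => ())
    (fun ω ω' _ => rfl)
  refine le_trans h (le_of_eq ?_)
  unfold condEntropy
  rw [entropy_const h1, entropy_congr (μ := μ) (X := fun ω => (A ω, ()))
    (Y := A) (fun ω ω' => by simp [Prod.ext_iff])]
  ring

lemma condEntropy_chain {α β γ' : Type*} (A : Ω → α) (B : Ω → β) (C : Ω → γ') :
    condEntropy μ (fun ω => (A ω, B ω)) C
      = condEntropy μ B C + condEntropy μ A (fun ω => (B ω, C ω)) := by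
  unfold condEntropy
  have h : entropy μ (fun ω => ((A ω, B ω), C ω)) = entropy μ (fun ω => (A ω, (B ω, C ω))) :=
    entropy_congr (fun ω ω' => by simp [Prod.ext_iff, and_assoc])
  rw [h]
  ring

lemma mutInfo_eq_sub {α β : Type*} (M : Ω → α) (Y : Ω → β) :
    mutInfo μ M Y = entropy μ Y - condEntropy μ Y M := by
  unfold mutInfo condEntropy
  have h : entropy μ (fun ω => (M ω, Y ω)) = entropy μ (fun ω => (Y ω, M ω)) :=
    entropy_congr (fun ω ω' => by simp [Prod.ext_iff, and_comm])
  rw [h]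
  ring

lemma mutInfo_nonneg' {α β : Type*} (h0 : ∀ ω, 0 ≤ μ ω) (h1 : ∑ ω, μ ω = 1)
    (M : Ω → α) (Y : Ω → β) : 0 ≤ mutInfo μ M Y := by
  have h := condEntropy_le_entropy h0 h1 M Y
  unfold mutInfo
  unfold condEntropy at h
  linarith

end Chunk3

section ChunkD
variable {Ω : Type*} [Fintype Ω] {μ : Ω → ℝ} {N : ℕ}

/-- masked restriction of the family `X` to the index set `S` -/
def XM (X : Fin N → Ω → Bool) (S : Finset (Fin N)) : Ω → (Fin N → Bool) :=
  fun ω j => if j ∈ S then X j ω else false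

lemma XM_fiber (X : Fin N → Ω → Bool) (S : Finset (Fin N)) (ω ω' : Ω) :
    XM X S ω = XM X S ω' ↔ ∀ j ∈ S, X j ω = X j ω' := by
  constructor
  · intro h j hj
    have := congrFun h j
    simpa [XM, hj] using this
  · intro h
    funext j
    by_cases hj : j ∈ S <;> simp [XM, hj]
    exact h j hj

lemma condEntropy_const {β α : Type*} (b : β) (M : Ω → α) :
    condEntropy μ (fun _ : Ω => b) M = 0 := by
  unfold condEntropy
  rw [entropy_congr (μ := μ) (X := fun ω => (b, M ω)) (Y := M)
    (fun ω ω' => by simp [Prod.ext_iff])]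
  ring

/-- chain inequality (Shearer-type step) -/
lemma chainS {γ : Type*} (h0 : ∀ ω, 0 ≤ μ ω) (h1 : ∑ ω, μ ω = 1)
    (X : Fin N → Ω → Bool) (M : Ω → γ) (S : Finset (Fin N)) :
    ∑ i ∈ S, condEntropy μ (fun ω => X i ω)
        (fun ω => (XM X (Finset.univ.filter fun j => (j : ℕ) < (i : ℕ)) ω, M ω))
      ≤ condEntropy μ (XM X S) M := by
  classical
  induction S using Finset.strongInduction with
  | _ T ih =>
    rcases T.eq_empty_or_nonempty with rfl | hne
    · simp only [Finset.sum_empty]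
      refine le_of_eq ?_
      rw [show condEntropy μ (XM X ∅) M = condEntropy μ (fun _ : Ω => ()) M from
        condEntropy_congr (fun ω ω' => by simp [XM_fiber]) (fun ω ω' => Iff.rfl),
        condEntropy_const]
    · set m := T.max' hne with hm
      have hmem : m ∈ T := T.max'_mem hne
      set T' := T.erase m with hT'
      have hss : T' ⊂ T := Finset.erase_ssubset hmem
      have IH := ih T' hss
      have hchain : condEntropy μ (XM X T) M
          = condEntropy μ (XM X T') M
            + condEntropy μ (fun ω => X m ω) (fun ω => (XM X T' ω, M ω)) := by
        rw [show condEntropy μ (XM X T) M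
            = condEntropy μ (fun ω => (X m ω, XM X T' ω)) M from
          condEntropy_congr (fun ω ω' => by
            rw [XM_fiber]
            constructor
            · intro h
              simp only [Prod.ext_iff]
              exact ⟨h m hmem, funext fun j => by
                by_cases hj : j ∈ T'
                · simp [XM, hj, h j (Finset.mem_of_mem_erase hj)]
                · simp [XM, hj]⟩
            · intro hpair
              rw [Prod.mk.injEq] at hpair
              obtain ⟨h1', h2'⟩ := hpair
              intro j hj
              by_cases hjm : j = m
              · rw [hjm]; exact h1'
              · have hj' : j ∈ T' := Finset.mem_erase.mpr ⟨hjm, hj⟩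
                have := congrFun h2' j
                simpa [XM, hj'] using this) (fun ω ω' => Iff.rfl)]
        exact condEntropy_chain _ _ _
      have hmono : condEntropy μ (fun ω => X m ω)
          (fun ω => (XM X (Finset.univ.filter fun j => (j : ℕ) < (m : ℕ)) ω, M ω))
          ≤ condEntropy μ (fun ω => X m ω) (fun ω => (XM X T' ω, M ω)) := by
        refine condEntropy_mono_cond h0 h1 ?_
        intro ω ω' h
        have h1' := (Prod.ext_iff.mp h).1
        have h2' := (Prod.ext_iff.mp h).2
        have hfib := (XM_fiber X _ ω ω').mp h1'
        refine Prod.ext ?_ h2'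
        rw [XM_fiber]
        intro j hj
        refine hfib j (Finset.mem_filter.mpr ⟨Finset.mem_univ j, ?_⟩)
        have hjT : j ∈ T := Finset.mem_of_mem_erase hj
        have hjm : j ≠ m := (Finset.mem_erase.mp hj).1
        exact lt_of_le_of_ne (T.le_max' j hjT) (fun hc => hjm (Fin.ext hc))
      calc ∑ i ∈ T, condEntropy μ (fun ω => X i ω)
            (fun ω => (XM X (Finset.univ.filter fun j => (j : ℕ) < (i : ℕ)) ω, M ω))
          = ∑ i ∈ T', condEntropy μ (fun ω => X i ω)
            (fun ω => (XM X (Finset.univ.filter fun j => (j : ℕ) < (i : ℕ)) ω, M ω))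
            + condEntropy μ (fun ω => X m ω)
            (fun ω => (XM X (Finset.univ.filter fun j => (j : ℕ) < (m : ℕ)) ω, M ω)) :=
            (Finset.sum_erase_add T _ hmem).symm
        _ ≤ condEntropy μ (XM X T') M
            + condEntropy μ (fun ω => X m ω) (fun ω => (XM X T' ω, M ω)) :=
            add_le_add IH hmono
        _ = condEntropy μ (XM X T) M := hchain.symm

/-- chain equality for prefixes -/
lemma chainEq {γ : Type*} (X : Fin N → Ω → Bool) (M : Ω → γ) (n : ℕ) :
    condEntropy μ (XM X (Finset.univ.filter fun j : Fin N => (j : ℕ) < n)) M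
      = ∑ i ∈ Finset.univ.filter (fun i : Fin N => (i : ℕ) < n),
          condEntropy μ (fun ω => X i ω)
            (fun ω => (XM X (Finset.univ.filter fun j => (j : ℕ) < (i : ℕ)) ω, M ω)) := by
  classical
  induction n with
  | zero =>
    have hf : (Finset.univ.filter fun j : Fin N => (j : ℕ) < 0) = ∅ := by
      ext j; simp
    rw [hf, Finset.sum_empty,
      show condEntropy μ (XM X ∅) M = condEntropy μ (fun _ : Ω => ()) M from
        condEntropy_congr (fun ω ω' => by simp [XM_fiber]) (fun ω ω' => Iff.rfl),
      condEntropy_const]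
  | succ n ihn =>
    by_cases hn : n < N
    · set m : Fin N := ⟨n, hn⟩ with hmdef
      have hins : (Finset.univ.filter fun j : Fin N => (j : ℕ) < n + 1)
          = insert m (Finset.univ.filter fun j : Fin N => (j : ℕ) < n) := by
        ext j
        simp only [Finset.mem_filter, Finset.mem_univ, true_and, Finset.mem_insert]
        constructor
        · intro h
          rcases Nat.lt_succ_iff_lt_or_eq.mp h with h' | h'
          · exact Or.inr h'
          · exact Or.inl (Fin.ext h')
        · rintro (rfl | h)
          · exact Nat.lt_succ_self n
          · exact Nat.lt_succ_of_lt h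
      have hnm : m ∉ (Finset.univ.filter fun j : Fin N => (j : ℕ) < n) := by
        simp [hmdef]
      set F := Finset.univ.filter fun j : Fin N => (j : ℕ) < n with hF
      have hchain : condEntropy μ (XM X (insert m F)) M
          = condEntropy μ (XM X F) M
            + condEntropy μ (fun ω => X m ω) (fun ω => (XM X F ω, M ω)) := by
        rw [show condEntropy μ (XM X (insert m F)) M
            = condEntropy μ (fun ω => (X m ω, XM X F ω)) M from
          condEntropy_congr (fun ω ω' => by
            rw [XM_fiber]
            constructor
            · intro h
              simp only [Prod.ext_iff]
              exact ⟨h m (Finset.mem_insert_self m F), funext fun j => by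
                by_cases hj : j ∈ F
                · simp [XM, hj, h j (Finset.mem_insert_of_mem hj)]
                · simp [XM, hj]⟩
            · intro hpair
              rw [Prod.mk.injEq] at hpair
              obtain ⟨h1', h2'⟩ := hpair
              intro j hj
              rcases Finset.mem_insert.mp hj with rfl | hj'
              · exact h1'
              · have := congrFun h2' j
                simpa [XM, hj'] using this) (fun ω ω' => Iff.rfl)]
        exact condEntropy_chain _ _ _
      have hmF : (Finset.univ.filter fun j : Fin N => (j : ℕ) < (m : ℕ)) = F := by
        rw [hF, hmdef]
      rw [hins, hchain, Finset.sum_insert hnm, ihn, hmF]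
      ring
    · have hf : ∀ j : Fin N, ((j : ℕ) < n + 1 ↔ (j : ℕ) < n) := by
        intro j
        have := j.isLt
        omega
      have hfe : (Finset.univ.filter fun j : Fin N => (j : ℕ) < n + 1)
          = Finset.univ.filter fun j : Fin N => (j : ℕ) < n := by
        ext j; simp only [Finset.mem_filter, Finset.mem_univ, true_and, hf j]
      rw [hfe, ihn]

lemma prob_split_bool (P : Ω → Prop) (V : Ω → Bool) :
    prob μ {ω | P ω} = prob μ {ω | P ω ∧ V ω = true} + prob μ {ω | P ω ∧ V ω = false} := by
  classical
  unfold prob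
  rw [← Finset.sum_add_distrib]
  refine Finset.sum_congr rfl fun ω _ => ?_
  by_cases hP : P ω
  · cases hV : V ω <;> simp [hP, hV]
  · simp [hP]

lemma pj_sum (h1 : ∑ ω, μ ω = 1) (V : Ω → Bool) :
    prob μ {ω | V ω = true} + prob μ {ω | V ω = false} = 1 := by
  have h := prob_split_bool (μ := μ) (fun _ => True) V
  simp only [true_and] at h
  rw [show {ω : Ω | True} = (Set.univ : Set Ω) from by ext; simp, prob_univ h1] at h
  exact h.symm

lemma pmarg (h1 : ∑ ω, μ ω = 1) (X : Fin N → Ω → Bool)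
    (hindep : ∀ b : Fin N → Bool,
      prob μ {ω | ∀ i, X i ω = b i} = ∏ i, prob μ {ω | X i ω = b i})
    (S : Finset (Fin N)) (b : Fin N → Bool) :
    prob μ {ω | ∀ i ∈ S, X i ω = b i} = ∏ i ∈ S, prob μ {ω | X i ω = b i} := by
  classical
  suffices h : ∀ (T : Finset (Fin N)) (b : Fin N → Bool),
      prob μ {ω | ∀ i ∈ Tᶜ, X i ω = b i} = ∏ i ∈ Tᶜ, prob μ {ω | X i ω = b i} by
    have := h Sᶜ b
    rwa [compl_compl] at this
  intro T
  induction T using Finset.induction_on with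
  | empty =>
    intro b
    rw [show ((∅ : Finset (Fin N))ᶜ) = Finset.univ from by simp]
    rw [show {ω | ∀ i ∈ Finset.univ, X i ω = b i} = {ω | ∀ i, X i ω = b i} from by
      ext; simp]
    rw [hindep b]
  | @insert j T hj ih =>
    intro b
    rw [Finset.compl_insert]
    have hjc : j ∈ Tᶜ := by simp [hj]
    have hsplit := prob_split_bool (μ := μ) (fun ω => ∀ i ∈ Tᶜ.erase j, X i ω = b i) (X j)
    have hset : ∀ c : Bool, {ω | (∀ i ∈ Tᶜ.erase j, X i ω = b i) ∧ X j ω = c}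
        = {ω | ∀ i ∈ Tᶜ, X i ω = Function.update b j c i} := by
      intro c
      ext ω
      simp only [Set.mem_setOf_eq]
      constructor
      · rintro ⟨hh, hc⟩ i hi
        by_cases hij : i = j
        · subst hij; simp [hc]
        · rw [Function.update_of_ne hij]
          exact hh i (Finset.mem_erase.mpr ⟨hij, hi⟩)
      · intro hh
        constructor
        · intro i hi
          have := hh i (Finset.mem_of_mem_erase hi)
          rwa [Function.update_of_ne (Finset.mem_erase.mp hi).1] at this
        · have := hh j hjc
          simpa using this
    have hval : ∀ c : Bool, prob μ {ω | ∀ i ∈ Tᶜ, X i ω = Function.update b j c i}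
        = prob μ {ω | X j ω = c} * ∏ i ∈ Tᶜ.erase j, prob μ {ω | X i ω = b i} := by
      intro c
      rw [ih (Function.update b j c)]
      rw [← Finset.mul_prod_erase _ _ hjc]
      congr 1
      · simp
      · refine Finset.prod_congr rfl fun i hi => ?_
        rw [Function.update_of_ne (Finset.mem_erase.mp hi).1]
    rw [hsplit, hset true, hset false, hval true, hval false, ← add_mul,
      pj_sum h1 (X j), one_mul]

/-- entropy additivity for independent coordinates -/
lemma entS (h0 : ∀ ω, 0 ≤ μ ω) (h1 : ∑ ω, μ ω = 1) (X : Fin N → Ω → Bool)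
    (hindep : ∀ b : Fin N → Bool,
      prob μ {ω | ∀ i, X i ω = b i} = ∏ i, prob μ {ω | X i ω = b i})
    (S : Finset (Fin N)) :
    entropy μ (XM X S) = ∑ i ∈ S, entropy μ (fun ω => X i ω) := by
  classical
  have e1 : entropy μ (XM X S)
      = -∑ ω, μ ω * Real.logb 2 (prob μ {ω' | ∀ i ∈ S, X i ω' = X i ω}) :=
    entropy_def' _ _ (fun ω => by
      ext ω'
      simpa [Set.mem_setOf_eq] using XM_fiber X S ω' ω)
  rw [e1]
  have e2 : ∀ ω, prob μ {ω' | ∀ i ∈ S, X i ω' = X i ω}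
      = ∏ i ∈ S, prob μ {ω' | X i ω' = X i ω} := fun ω => pmarg h1 X hindep S _
  have e3 : ∀ ω, μ ω * Real.logb 2 (∏ i ∈ S, prob μ {ω' | X i ω' = X i ω})
      = ∑ i ∈ S, μ ω * Real.logb 2 (prob μ {ω' | X i ω' = X i ω}) := by
    intro ω
    rcases eq_or_lt_of_le (h0 ω) with hω | hω
    · rw [← hω]; simp
    · rw [Real.logb_prod _ _ (fun i _ => ne_of_gt (lt_of_lt_of_le hω
        (le_prob_of_mem h0 (by exact rfl)))), Finset.mul_sum]
  rw [show ∑ ω, μ ω * Real.logb 2 (prob μ {ω' | ∀ i ∈ S, X i ω' = X i ω})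
      = ∑ ω, ∑ i ∈ S, μ ω * Real.logb 2 (prob μ {ω' | X i ω' = X i ω}) from
    Finset.sum_congr rfl fun ω _ => by rw [e2 ω, e3 ω]]
  rw [Finset.sum_comm, ← Finset.sum_neg_distrib]
  rfl

end ChunkD

section Count

lemma count_cover (N q : ℕ) (hN : 1 ≤ N) (i : Fin N) :
    (((Finset.univ : Finset (Fin q → Fin N)).filter
        (fun idx => ∃ t, idx t = i)).card : ℝ) / (N : ℝ) ^ q
      = 1 - (1 - 1 / (N : ℝ)) ^ q := by
  classical
  have hcardtot : (Finset.univ : Finset (Fin q → Fin N)).card = N ^ q := by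
    simp [Finset.card_univ]
  have hnot : ((Finset.univ : Finset (Fin q → Fin N)).filter
      (fun idx => ¬ ∃ t, idx t = i)).card = (N - 1) ^ q := by
    rw [← Fintype.card_subtype]
    have e : {idx : Fin q → Fin N // ¬ ∃ t, idx t = i} ≃ (Fin q → {x : Fin N // x ≠ i}) :=
      (Equiv.subtypeEquivRight (fun idx => by push_neg; rfl)).trans
        (Equiv.subtypePiEquivPi (p := fun _ x => x ≠ i))
    rw [Fintype.card_congr e]
    simp [Fintype.card_fun, Fintype.card_subtype_compl]
  have hsplit := Finset.card_filter_add_card_filter_not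
    (s := (Finset.univ : Finset (Fin q → Fin N))) (p := fun idx => ∃ t, idx t = i)
  have hsplit' : ((Finset.univ : Finset (Fin q → Fin N)).filter
        (fun idx => ∃ t, idx t = i)).card
      + ((Finset.univ : Finset (Fin q → Fin N)).filter
        (fun idx => ¬ ∃ t, idx t = i)).card = N ^ q := by
    simpa [hcardtot] using hsplit
  rw [hnot] at hsplit'
  have hle : (N - 1) ^ q ≤ N ^ q := Nat.pow_le_pow_left (Nat.sub_le N 1) q
  have hcard := Nat.eq_sub_of_add_eq hsplit'
  rw [hcard]
  have hN0 : (0:ℝ) < (N:ℝ) := by exact_mod_cast Nat.lt_of_lt_of_le Nat.zero_lt_one hN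
  have hcast : ((N ^ q - (N - 1) ^ q : ℕ) : ℝ) = (N:ℝ)^q - ((N:ℝ) - 1)^q := by
    rw [Nat.cast_sub hle]
    push_cast [Nat.cast_sub hN]
    ring
  rw [hcast]
  have h1N : (1:ℝ) - 1/(N:ℝ) = ((N:ℝ) - 1)/(N:ℝ) := by field_simp
  rw [h1N, div_pow]
  field_simp

lemma bern (N q : ℕ) (hN : 1 ≤ N) : 1 - (1 - 1/(N:ℝ))^q ≤ (q:ℝ)/N := by
  have hN' : (1:ℝ) ≤ (N:ℝ) := by exact_mod_cast hN
  have h1 : 1/(N:ℝ) ≤ 1 := by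
    rw [div_le_one (by linarith)]; linarith
  have h0 : 0 < 1/(N:ℝ) := by positivity
  have h := one_add_mul_le_pow (a := -(1/(N:ℝ))) (by linarith) q
  have he : (1 + -(1/(N:ℝ)))^q = (1 - 1/(N:ℝ))^q := by ring_nf
  rw [he] at h
  have : (q:ℝ) * (1/(N:ℝ)) = (q:ℝ)/N := by ring
  nlinarith [h]

end Count

-- Let `X ∈ {0,1}^N` have iid entries and let `S` be the set of indices appearing
-- among `q` iid uniform samples from `[N]`, so `μ = Pr[i ∈ S] = 1 − (1 − 1/N)^q`.
-- Then `μ ≤ q/N`, and for any `M` with `I(M ; X) ≤ c`,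
-- `E_S[I(M ; X_S)] ≤ (q/N)·c`.
open Classical in
theorem expected_restricted_mutInfo_bound {Ω γ : Type*} [Fintype Ω]
    (μ : Ω → ℝ) (hμ0 : ∀ ω, 0 ≤ μ ω) (hμ1 : ∑ ω, μ ω = 1)
    (N q : ℕ) (hN : 1 ≤ N)
    (X : Fin N → Ω → Bool) (M : Ω → γ) (c : ℝ)
    (hindep : ∀ b : Fin N → Bool,
      prob μ {ω | ∀ i, X i ω = b i} = ∏ i, prob μ {ω | X i ω = b i})
    (hident : ∀ i j : Fin N,
      prob μ {ω | X i ω = true} = prob μ {ω | X j ω = true})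
    (hc : mutInfo μ M (fun ω => fun i : Fin N => X i ω) ≤ c) :
    (∀ i : Fin N,
        (((Finset.univ : Finset (Fin q → Fin N)).filter
            (fun idx => ∃ t, idx t = i)).card : ℝ) / (N : ℝ) ^ q
          = 1 - (1 - 1 / (N : ℝ)) ^ q) ∧
    (1 - (1 - 1 / (N : ℝ)) ^ q ≤ (q : ℝ) / N) ∧
    (((N : ℝ) ^ q)⁻¹ * ∑ idx : Fin q → Fin N,
        mutInfo μ M (fun ω => fun i : {i : Fin N // ∃ t, idx t = i} => X i.1 ω)
      ≤ ((q : ℝ) / N) * c) := by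
  classical
  refine ⟨fun i => count_cover N q hN i, bern N q hN, ?_⟩
  set k : ℝ := 1 - (1 - 1/(N:ℝ))^q with hk
  have hN0 : (0:ℝ) < (N:ℝ) := by exact_mod_cast Nat.lt_of_lt_of_le Nat.zero_lt_one hN
  have hNq : (0:ℝ) < (N:ℝ)^q := by positivity
  have hcard : ∀ i : Fin N,
      (((Finset.univ : Finset (Fin q → Fin N)).filter
          (fun idx => ∃ t, idx t = i)).card : ℝ) = k * (N:ℝ)^q := by
    intro i
    have h := count_cover N q hN i
    rw [div_eq_iff (ne_of_gt hNq)] at h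
    exact h
  have hk0 : 0 ≤ k := by
    have hi : (0:ℕ) < N := hN
    have h := count_cover N q hN ⟨0, hi⟩
    rw [hk, ← h]
    positivity
  -- notation
  set fullX : Ω → (Fin N → Bool) := (fun ω => fun i : Fin N => X i ω) with hfullX
  set e : Fin N → ℝ := fun i => entropy μ (fun ω => X i ω) with he
  set h : Fin N → ℝ := fun i => condEntropy μ (fun ω => X i ω)
      (fun ω => (XM X (Finset.univ.filter fun j => (j : ℕ) < (i : ℕ)) ω, M ω)) with hh
  set a : Fin N → ℝ := fun i => e i - h i with ha
  -- full entropy identities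
  have hXMuniv : ∀ ω ω', XM X (Finset.univ : Finset (Fin N)) ω
      = XM X Finset.univ ω' ↔ fullX ω = fullX ω' := by
    intro ω ω'
    rw [XM_fiber]
    constructor
    · intro hfa; funext i; exact hfa i (Finset.mem_univ i)
    · intro hfa i _; exact congrFun hfa i
  have hent_full : entropy μ fullX = ∑ i, e i := by
    rw [← entS hμ0 hμ1 X hindep Finset.univ]
    exact entropy_congr (fun ω ω' => (hXMuniv ω ω').symm)
  have hcond_full : condEntropy μ fullX M = ∑ i, h i := by
    have hfe : (Finset.univ.filter fun j : Fin N => (j : ℕ) < N) = Finset.univ := by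
      ext j; simp [j.isLt]
    have hce := chainEq (μ := μ) X M N
    rw [hfe] at hce
    rw [← hce]
    exact condEntropy_congr (fun ω ω' => (hXMuniv ω ω').symm) (fun ω ω' => Iff.rfl)
  have hmi_full : mutInfo μ M fullX = ∑ i, a i := by
    rw [mutInfo_eq_sub, hent_full, hcond_full, ← Finset.sum_sub_distrib]
  have hc0 : 0 ≤ c := le_trans (mutInfo_nonneg' hμ0 hμ1 M fullX) hc
  -- per-sample bound
  have hidx : ∀ idx : Fin q → Fin N,
      mutInfo μ M (fun ω => fun i : {i : Fin N // ∃ t, idx t = i} => X i.1 ω)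
        ≤ ∑ i ∈ Finset.univ.filter (fun i : Fin N => ∃ t, idx t = i), a i := by
    intro idx
    set S := Finset.univ.filter (fun i : Fin N => ∃ t, idx t = i) with hS
    have hcongr : mutInfo μ M (fun ω => fun i : {i : Fin N // ∃ t, idx t = i} => X i.1 ω)
        = mutInfo μ M (XM X S) := by
      refine mutInfo_congr₂ (fun ω ω' => ?_)
      rw [XM_fiber]
      constructor
      · intro hfa j hj
        have hjp : ∃ t, idx t = j := by simpa [hS] using hj
        exact congrFun hfa ⟨j, hjp⟩
      · intro hfa
        funext i
        exact hfa i.1 (by simp [hS, i.2])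
    rw [hcongr, mutInfo_eq_sub]
    have hent := entS hμ0 hμ1 X hindep S
    have hch := chainS hμ0 hμ1 X M S
    rw [hent]
    have hsum : ∑ i ∈ S, a i = ∑ i ∈ S, e i - ∑ i ∈ S, h i := by
      rw [← Finset.sum_sub_distrib]
    rw [hsum]
    have : ∑ i ∈ S, h i ≤ condEntropy μ (XM X S) M := hch
    have hee : ∑ i ∈ S, entropy μ (fun ω => X i ω) = ∑ i ∈ S, e i := rfl
    rw [hee]
    linarith
  -- sum over samples
  have hswap : ∑ idx : Fin q → Fin N,
      ∑ i ∈ Finset.univ.filter (fun i : Fin N => ∃ t, idx t = i), a i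
      = ∑ i : Fin N, (((Finset.univ : Finset (Fin q → Fin N)).filter
          (fun idx => ∃ t, idx t = i)).card : ℝ) * a i := by
    have h1 : ∀ idx : Fin q → Fin N,
        ∑ i ∈ Finset.univ.filter (fun i : Fin N => ∃ t, idx t = i), a i
        = ∑ i : Fin N, if ∃ t, idx t = i then a i else 0 := fun idx =>
      Finset.sum_filter _ _
    rw [Finset.sum_congr rfl fun idx _ => h1 idx, Finset.sum_comm]
    refine Finset.sum_congr rfl fun i _ => ?_
    rw [← Finset.sum_filter, Finset.sum_const, nsmul_eq_mul]
  have hbound : ∑ idx : Fin q → Fin N,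
      mutInfo μ M (fun ω => fun i : {i : Fin N // ∃ t, idx t = i} => X i.1 ω)
      ≤ k * (N:ℝ)^q * c := by
    calc ∑ idx : Fin q → Fin N,
        mutInfo μ M (fun ω => fun i : {i : Fin N // ∃ t, idx t = i} => X i.1 ω)
        ≤ ∑ idx : Fin q → Fin N,
          ∑ i ∈ Finset.univ.filter (fun i : Fin N => ∃ t, idx t = i), a i :=
          Finset.sum_le_sum fun idx _ => hidx idx
      _ = ∑ i : Fin N, (((Finset.univ : Finset (Fin q → Fin N)).filter
          (fun idx => ∃ t, idx t = i)).card : ℝ) * a i := hswap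
      _ = k * (N:ℝ)^q * ∑ i, a i := by
          rw [Finset.mul_sum]
          exact Finset.sum_congr rfl fun i _ => by rw [hcard i]
      _ = k * (N:ℝ)^q * mutInfo μ M fullX := by rw [hmi_full]
      _ ≤ k * (N:ℝ)^q * c := by
          refine mul_le_mul_of_nonneg_left hc ?_
          positivity
  calc ((N : ℝ) ^ q)⁻¹ * ∑ idx : Fin q → Fin N,
        mutInfo μ M (fun ω => fun i : {i : Fin N // ∃ t, idx t = i} => X i.1 ω)
      ≤ ((N : ℝ) ^ q)⁻¹ * (k * (N:ℝ)^q * c) :=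
        mul_le_mul_of_nonneg_left hbound (by positivity)
    _ = k * c := by field_simp
    _ ≤ ((q:ℝ)/N) * c := mul_le_mul_of_nonneg_right (bern N q hN) hc0
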